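/- Let Ω be a subset of G containing the identity 1, and let w be an element of the free group F on A with [w]_G ∉ Ω. Then the net signed number of traversals by the path of w of the edges crossing the boundary of Ω equals 1; precisely, Σ c_w(h, a) over all (h, a) ∈ G × A with h ∈ Ω and h·φ(a) ∉ Ω, minus Σ c_w(h, a) over all (h, a) ∈ G × A with h ∉ Ω and h·φ(a) ∈ Ω, equals 1. -/

import Mathlib

open Multiplicative

/-- The shift action of `g : G` on functions `(G × A) → R`:
`(g · α)(h, a) = α (g⁻¹h, a)`. -/
def cayAct {G A : Type*} (R : Type*) [Group G] [AddCommGroup R] (g : G) :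
    ((G × A) → R) ≃+ ((G × A) → R) where
  toFun α := fun x => α (g⁻¹ * x.1, x.2)
  invFun α := fun x => α (g * x.1, x.2)
  left_inv := by intro α; funext x; simp
  right_inv := by intro α; funext x; simp
  map_add' := by intro α β; rfl

/-- The action of `G` on the (multiplicatively written) additive group `M` of
functions `(G × A) → R`, as a homomorphism into the automorphism group; it is
used to form the semidirect product `M ⋊ G`. -/
def cayHom (G A R : Type*) [Group G] [AddCommGroup R] :
    G →* MulAut (Multiplicative ((G × A) → R)) where
  toFun g := AddEquiv.toMultiplicative (cayAct R g)
  map_one' := by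
    apply MulEquiv.ext
    intro α
    apply Multiplicative.toAdd.injective
    funext x
    simp [cayAct, AddEquiv.toMultiplicative]
  map_mul' := by
    intro g h
    apply MulEquiv.ext
    intro α
    apply Multiplicative.toAdd.injective
    funext x
    simp [cayAct, AddEquiv.toMultiplicative, mul_assoc]

/-- The generator `(δ_{(1,a)}, φ a)` of `M ⋊ G`. -/
def cayGen {G A : Type*} (R : Type*) [Group G] [AddCommGroup R] [One R]
    [DecidableEq G] [DecidableEq A] (φ : A → G) (a : A) :
    Multiplicative ((G × A) → R) ⋊[cayHom G A R] G :=
  ⟨ofAdd (fun x => if x = ((1 : G), a) then (1 : R) else 0), φ a⟩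

/-- The model `H` of the universal Gaschütz `p`-extension `G^{ℤ/p}`: the subgroup
of `M ⋊ G` generated by the elements `(δ_{(1,a)}, φ a)` for `a ∈ A`. -/
def gaschutzH (G A : Type*) [Group G] [DecidableEq G] [DecidableEq A]
    (p : ℕ) (φ : A → G) :
    Subgroup (Multiplicative ((G × A) → ZMod p) ⋊[cayHom G A (ZMod p)] G) :=
  Subgroup.closure (Set.range (cayGen (ZMod p) φ))

/-- The homomorphism from the free group on `A` to `M ⋊ G` sending `a` to
`(δ_{(1,a)}, φ a)`. -/
def cayLift {G A : Type*} (R : Type*) [Group G] [AddCommGroup R] [One R]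
    [DecidableEq G] [DecidableEq A] (φ : A → G) :
    FreeGroup A →* (Multiplicative ((G × A) → R) ⋊[cayHom G A R] G) :=
  FreeGroup.lift (cayGen R φ)

/-- The edge-traversal count `c_w : G × A → ℤ` of a word `w` in the free group:
`c_w (g, a)` is the signed number of times the path reading `w` from `1` in the
Cayley graph of `G` traverses the edge from `g` to `g·φ a` labeled `a`. -/
def edgeCount {G A : Type*} [Group G] [DecidableEq G] [DecidableEq A]
    (φ : A → G) (w : FreeGroup A) : (G × A) → ℤ :=
  toAdd (cayLift ℤ φ w).left

section aux
variable {G A : Type*} [Group G] [DecidableEq G] [DecidableEq A] (φ : A → G)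

lemma cayLift_right (w : FreeGroup A) : (cayLift ℤ φ w).right = FreeGroup.lift φ w := by
  have : (SemidirectProduct.rightHom.comp (cayLift ℤ φ) : FreeGroup A →* G) = FreeGroup.lift φ := by
    apply FreeGroup.ext_hom
    intro a
    simp [cayLift, cayGen, SemidirectProduct.rightHom]
  exact congrFun (congrArg (fun f => f.toFun) this) w

lemma edgeCount_one : edgeCount φ (1 : FreeGroup A) = 0 := by
  simp [edgeCount]

lemma edgeCount_of (a : A) :
    edgeCount φ (FreeGroup.of a) = fun x => if x = ((1 : G), a) then 1 else 0 := by
  simp [edgeCount, cayLift, cayGen]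

lemma edgeCount_mul (u v : FreeGroup A) (x : G × A) :
    edgeCount φ (u * v) x
      = edgeCount φ u x + edgeCount φ v ((FreeGroup.lift φ u)⁻¹ * x.1, x.2) := by
  simp only [edgeCount, map_mul, SemidirectProduct.mul_left, toAdd_mul, Pi.add_apply]
  congr 1
  rw [← cayLift_right φ u]
  rfl

lemma edgeCount_inv (w : FreeGroup A) (x : G × A) :
    edgeCount φ w⁻¹ x = - edgeCount φ w (FreeGroup.lift φ w * x.1, x.2) := by
  simp only [edgeCount, map_inv, SemidirectProduct.inv_left]
  rw [← cayLift_right φ w]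
  rfl

end aux

lemma key_lemma {G A : Type*} [Group G] [Fintype G] [Fintype A] [DecidableEq G] [DecidableEq A]
    (φ : A → G) (Ω : Set G) [DecidablePred (· ∈ Ω)] (w : FreeGroup A) : ∀ g : G,
    ∑ x : G × A, edgeCount φ w x *
        ((if g * x.1 ∈ Ω then (1:ℤ) else 0) - (if g * x.1 * φ x.2 ∈ Ω then 1 else 0))
      = (if g ∈ Ω then 1 else 0) - (if g * FreeGroup.lift φ w ∈ Ω then 1 else 0) := by
  induction w using FreeGroup.induction_on with
  | C1 => intro g; simp [edgeCount_one]
  | of a =>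
      intro g
      simp only [edgeCount_of, ite_mul, one_mul, zero_mul]
      rw [Finset.sum_ite_eq' Finset.univ ((1:G), a)]
      simp
  | inv_of a ih =>
      intro g
      have hinv : ∀ x : G × A, edgeCount φ (FreeGroup.of a)⁻¹ x
          = - edgeCount φ (FreeGroup.of a) (φ a * x.1, x.2) := by
        intro x
        simpa using edgeCount_inv φ (FreeGroup.of a) x
      have hc : ∀ x : G × A, ((φ a * x.1, x.2) = ((1:G), a)) ↔ (x = ((φ a)⁻¹, a)) := by
        intro x
        rw [Prod.ext_iff, Prod.ext_iff, mul_eq_one_iff_inv_eq]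
        simp [eq_comm]
      simp only [hinv, edgeCount_of, hc, neg_mul, ite_mul, one_mul, zero_mul]
      rw [Finset.sum_neg_distrib, Finset.sum_ite_eq' Finset.univ ((φ a)⁻¹, a)]
      simp [mul_assoc]
  | mul u v ihu ihv =>
      intro g
      simp only [edgeCount_mul, add_mul, Finset.sum_add_distrib]
      rw [ihu g]
      have := Fintype.sum_equiv
        ((Equiv.mulLeft (FreeGroup.lift φ u)).prodCongr (Equiv.refl A))
        (fun x : G × A => edgeCount φ v x *
          ((if (g * FreeGroup.lift φ u) * x.1 ∈ Ω then (1:ℤ) else 0) -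
           (if (g * FreeGroup.lift φ u) * x.1 * φ x.2 ∈ Ω then 1 else 0)))
        (fun x : G × A => edgeCount φ v ((FreeGroup.lift φ u)⁻¹ * x.1, x.2) *
          ((if g * x.1 ∈ Ω then (1:ℤ) else 0) - (if g * x.1 * φ x.2 ∈ Ω then 1 else 0)))
        (by intro x; simp [Equiv.prodCongr, mul_assoc])
      rw [← this, ihv (g * FreeGroup.lift φ u)]
      simp [mul_assoc]

/-- If `Ω ⊆ G` contains `1` and `w` evaluates outside `Ω`,
then the net signed number of traversals by the path of `w` of the edges
crossing the boundary of `Ω` equals `1`. -/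
theorem boundary_crossing_count
    {G A : Type*} [Group G] [Fintype G] [Fintype A] [DecidableEq G] [DecidableEq A]
    (φ : A → G) (hgen : Subgroup.closure (Set.range φ) = ⊤)
    (Ω : Set G) [DecidablePred (· ∈ Ω)] (hΩ : (1 : G) ∈ Ω)
    (w : FreeGroup A) (hw : FreeGroup.lift φ w ∉ Ω) :
    (∑ x ∈ Finset.univ.filter (fun x : G × A => x.1 ∈ Ω ∧ x.1 * φ x.2 ∉ Ω),
        edgeCount φ w x) -
      (∑ x ∈ Finset.univ.filter (fun x : G × A => x.1 ∉ Ω ∧ x.1 * φ x.2 ∈ Ω),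
        edgeCount φ w x) = 1 := by
  have hk := key_lemma φ Ω w 1
  simp only [one_mul] at hk
  rw [Finset.sum_filter, Finset.sum_filter, ← Finset.sum_sub_distrib]
  have hpt : ∀ x : G × A, (if x.1 ∈ Ω ∧ x.1 * φ x.2 ∉ Ω then edgeCount φ w x else 0)
      - (if x.1 ∉ Ω ∧ x.1 * φ x.2 ∈ Ω then edgeCount φ w x else 0)
      = edgeCount φ w x *
        ((if x.1 ∈ Ω then 1 else 0) - (if x.1 * φ x.2 ∈ Ω then 1 else 0)) := by
    intro x
    by_cases h1 : x.1 ∈ Ω <;> by_cases h2 : x.1 * φ x.2 ∈ Ω <;> simp [h1, h2]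
  rw [Finset.sum_congr rfl (fun x _ => hpt x), hk]
  simp [hΩ, hw]
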